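/- With Δ̄ := H(λ↓(ρ_AB)‖λ↓(σ_AB)) − H(λ↓(ρ_A)‖λ↑(σ_A)) − H(λ↓(ρ_B)‖λ↑(σ_B)) and Δ := H(λ↓(ρ_AB)‖λ↑(σ_AB)) − H(λ↓(ρ_A)‖λ↓(σ_A)) − H(λ↓(ρ_B)‖λ↓(σ_B)), one has Δ̄ ≤ ΔS ≤ Δ, where ΔS := S(ρ_AB‖σ_AB) − S(ρ_A‖σ_A) − S(ρ_B‖σ_B). -/

import Mathlib

open Matrix ComplexOrder

/-- Classical relative entropy with convention `0 * log 0 = 0` (automatic since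
`Real.log 0 = 0`). -/
noncomputable def relEnt {d : ℕ} (p q : Fin d → ℝ) : ℝ :=
  ∑ i, p i * (Real.log (p i) - Real.log (q i))

/-- Non-decreasing rearrangement `p↑`. -/
noncomputable def sortAsc {d : ℕ} (p : Fin d → ℝ) : Fin d → ℝ :=
  p ∘ Tuple.sort p

/-- Non-increasing rearrangement `p↓`. -/
noncomputable def sortDesc {d : ℕ} (p : Fin d → ℝ) : Fin d → ℝ :=
  (p ∘ Tuple.sort p) ∘ Fin.rev
/-- Matrix logarithm of a Hermitian matrix via its spectral decomposition
(junk value `0` on non-Hermitian matrices). -/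
noncomputable def matLog {n : Type*} [Fintype n] [DecidableEq n]
    (A : Matrix n n ℂ) : Matrix n n ℂ :=
  if h : A.IsHermitian then
    (h.eigenvectorUnitary : Matrix n n ℂ) *
      Matrix.diagonal (fun i => (Real.log (h.eigenvalues i) : ℂ)) *
      (star h.eigenvectorUnitary : Matrix n n ℂ)
  else 0

/-- Eigenvalue vector of a Hermitian matrix (junk value `0` otherwise). -/
noncomputable def evals {n : Type*} [Fintype n] [DecidableEq n]
    (A : Matrix n n ℂ) : n → ℝ :=
  if h : A.IsHermitian then h.eigenvalues else 0

/-- Quantum relative entropy `S(ρ‖σ) = Tr (ρ (log ρ − log σ))`. -/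
noncomputable def qRelEnt {n : Type*} [Fintype n] [DecidableEq n]
    (ρ σ : Matrix n n ℂ) : ℝ :=
  ((ρ * (matLog ρ - matLog σ)).trace).re

/-- von Neumann entropy `S(ρ) = −Tr (ρ log ρ)`. -/
noncomputable def vnEnt {n : Type*} [Fintype n] [DecidableEq n]
    (ρ : Matrix n n ℂ) : ℝ :=
  -((ρ * matLog ρ).trace).re

/-- Partial trace over the second (B) factor. -/
noncomputable def ptraceB {a b : ℕ}
    (ρ : Matrix (Fin a × Fin b) (Fin a × Fin b) ℂ) : Matrix (Fin a) (Fin a) ℂ :=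
  fun i j => ∑ k, ρ (i, k) (j, k)

/-- Partial trace over the first (A) factor. -/
noncomputable def ptraceA {a b : ℕ}
    (ρ : Matrix (Fin a × Fin b) (Fin a × Fin b) ℂ) : Matrix (Fin b) (Fin b) ℂ :=
  fun i j => ∑ k, ρ (k, i) (k, j)

/-- Eigenvalues of a matrix on a bipartite space, reindexed by `Fin (a*b)`. -/
noncomputable def evalsP {a b : ℕ}
    (ρ : Matrix (Fin a × Fin b) (Fin a × Fin b) ℂ) : Fin (a * b) → ℝ :=
  evals ρ ∘ finProdFinEquiv.symm

/-! ### Auxiliary lemmas -/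

section Sorting

lemma sortAsc_mono {d : ℕ} (p : Fin d → ℝ) : Monotone (sortAsc p) :=
  Tuple.monotone_sort p

lemma sortDesc_anti {d : ℕ} (p : Fin d → ℝ) : Antitone (sortDesc p) := by
  intro i j hij; exact Tuple.monotone_sort p (Fin.rev_le_rev.2 hij)

/-- The permutation realizing `sortDesc`. -/
noncomputable def descPerm {d : ℕ} (p : Fin d → ℝ) : Equiv.Perm (Fin d) :=
  Fin.revPerm.trans (Tuple.sort p)

lemma sortDesc_eq {d : ℕ} (p : Fin d → ℝ) (i : Fin d) : sortDesc p i = p (descPerm p i) := rfl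

lemma sum_sortDesc {d : ℕ} (p : Fin d → ℝ) (f : ℝ → ℝ) :
    ∑ i, f (sortDesc p i) = ∑ i, f (p i) := by
  simpa [sortDesc_eq] using Equiv.sum_comp (descPerm p) (fun i => f (p i))

lemma perm_lower {d : ℕ} (p q : Fin d → ℝ) (hq : ∀ i, 0 < q i) (σ : Equiv.Perm (Fin d)) :
    ∑ i, sortDesc p i * Real.log (sortAsc q i) ≤ ∑ i, p i * Real.log (q (σ i)) := by
  have hqa : ∀ i, 0 < sortAsc q i := fun i => hq _
  have hg : Monotone (fun i => Real.log (sortAsc q i)) := by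
    intro i j hij
    exact Real.log_le_log (hqa i) (sortAsc_mono q hij)
  have hA : Antivary (sortDesc p) (fun i => Real.log (sortAsc q i)) := by
    intro i j hij
    have hij' : i ≤ j := not_lt.1 fun h => not_lt.2 (hg h.le) hij
    exact sortDesc_anti p hij'
  set δ : Equiv.Perm (Fin d) := (descPerm p).trans (σ.trans (Tuple.sort q).symm) with hδ
  have key := hA.sum_smul_le_sum_smul_comp_perm (σ := δ)
  simp only [smul_eq_mul] at key
  refine key.trans_eq ?_
  rw [← Equiv.sum_comp (descPerm p) (fun i => p i * Real.log (q (σ i)))]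
  apply Finset.sum_congr rfl
  intro i _
  rw [sortDesc_eq p i]
  congr 1
  show Real.log (sortAsc q ((Tuple.sort q).symm (σ (descPerm p i)))) = _
  show Real.log (q (Tuple.sort q ((Tuple.sort q).symm (σ (descPerm p i))))) = _
  rw [Equiv.apply_symm_apply]

lemma perm_upper {d : ℕ} (p q : Fin d → ℝ) (hq : ∀ i, 0 < q i) (σ : Equiv.Perm (Fin d)) :
    ∑ i, p i * Real.log (q (σ i)) ≤ ∑ i, sortDesc p i * Real.log (sortDesc q i) := by
  have hqa : ∀ i, 0 < sortDesc q i := fun i => hq _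
  have hg : Antitone (fun i => Real.log (sortDesc q i)) := by
    intro i j hij
    exact Real.log_le_log (hqa j) (sortDesc_anti q hij)
  have hM : Monovary (sortDesc p) (fun i => Real.log (sortDesc q i)) := by
    intro i j hij
    have hij' : j ≤ i := not_lt.1 fun h => not_lt.2 (hg h.le) hij
    exact sortDesc_anti p hij'
  set δ : Equiv.Perm (Fin d) := (descPerm p).trans (σ.trans (descPerm q).symm) with hδ
  have key := hM.sum_smul_comp_perm_le_sum_smul (σ := δ)
  simp only [smul_eq_mul] at key
  refine le_trans (le_of_eq ?_) key
  rw [← Equiv.sum_comp (descPerm p) (fun i => p i * Real.log (q (σ i)))]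
  apply Finset.sum_congr rfl
  intro i _
  rw [sortDesc_eq p i]
  congr 1
  show _ = Real.log (sortDesc q ((descPerm q).symm (σ (descPerm p i))))
  show _ = Real.log (q (descPerm q ((descPerm q).symm (σ (descPerm p i)))))
  rw [Equiv.apply_symm_apply]

end Sorting

section DS

lemma ds_expand {n : Type*} [Fintype n] [DecidableEq n] {D : Matrix n n ℝ}
    (hD : D ∈ doublyStochastic ℝ n) (p c : n → ℝ) {L R : ℝ}
    (hL : ∀ σ : Equiv.Perm n, L ≤ ∑ i, p i * c (σ i))
    (hR : ∀ σ : Equiv.Perm n, ∑ i, p i * c (σ i) ≤ R) :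
    L ≤ ∑ i, ∑ j, p i * c j * D i j ∧ ∑ i, ∑ j, p i * c j * D i j ≤ R := by
  obtain ⟨w, hw0, hw1, hwD⟩ := exists_eq_sum_perm_of_mem_doublyStochastic hD
  have h1 : ∀ i : n, ∑ j, p i * c j * D i j
      = ∑ σ : Equiv.Perm n, w σ * (p i * c (σ i)) := by
    intro i
    rw [← hwD]
    simp only [Matrix.sum_apply, Matrix.smul_apply, Equiv.Perm.permMatrix,
      PEquiv.toMatrix_apply, Equiv.toPEquiv_apply, Option.mem_def, Option.some.injEq,
      smul_eq_mul, Finset.mul_sum]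
    rw [Finset.sum_comm]
    apply Finset.sum_congr rfl
    intro σ _
    rw [Finset.sum_eq_single (σ i)]
    · simp; ring
    · intro j _ hj
      simp [Ne.symm hj]
    · simp
  have expand : ∑ i, ∑ j, p i * c j * D i j = ∑ σ : Equiv.Perm n, w σ * ∑ i, p i * c (σ i) := by
    simp only [h1]
    rw [Finset.sum_comm]
    exact Finset.sum_congr rfl fun σ _ => (Finset.mul_sum _ _ _).symm
  constructor
  · rw [expand]
    calc L = ∑ σ : Equiv.Perm n, w σ * L := by rw [← Finset.sum_mul, hw1, one_mul]
    _ ≤ _ := Finset.sum_le_sum fun σ _ => mul_le_mul_of_nonneg_left (hL σ) (hw0 σ)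
  · rw [expand]
    calc ∑ σ : Equiv.Perm n, w σ * ∑ i, p i * c (σ i) ≤ ∑ σ : Equiv.Perm n, w σ * R :=
      Finset.sum_le_sum fun σ _ => mul_le_mul_of_nonneg_left (hR σ) (hw0 σ)
    _ = R := by rw [← Finset.sum_mul, hw1, one_mul]

end DS

section Trace

variable {n : Type*} [Fintype n] [DecidableEq n]

lemma cterm (z : ℂ) (a b : ℝ) :
    ((a : ℂ) * (z * (b : ℂ) * (starRingEnd ℂ) z)).re = a * b * ‖z‖ ^ 2 := by
  have h : (a : ℂ) * (z * (b : ℂ) * (starRingEnd ℂ) z) = ((a * b * ‖z‖ ^ 2 : ℝ) : ℂ) := by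
    push_cast
    rw [← Complex.mul_conj']
    ring_nf
  rw [h, Complex.ofReal_re]

lemma trace_mul_matLog (ρ σ : Matrix n n ℂ) (hρ : ρ.IsHermitian) (hσ : σ.IsHermitian) :
    ((ρ * matLog σ).trace).re = ∑ i, ∑ j, hρ.eigenvalues i * Real.log (hσ.eigenvalues j) *
      ‖(star (hρ.eigenvectorUnitary : Matrix n n ℂ) * (hσ.eigenvectorUnitary : Matrix n n ℂ)) i j‖ ^ 2 := by
  set U : Matrix n n ℂ := (hρ.eigenvectorUnitary : Matrix n n ℂ) with hU
  set V : Matrix n n ℂ := (hσ.eigenvectorUnitary : Matrix n n ℂ) with hV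
  set p : n → ℝ := hρ.eigenvalues
  set c : n → ℝ := fun j => Real.log (hσ.eigenvalues j)
  set W : Matrix n n ℂ := star U * V with hW
  have hlog : matLog σ = V * Matrix.diagonal (fun j => (c j : ℂ)) * star V := by
    rw [matLog, dif_pos hσ]
  have hρ' : ρ = U * Matrix.diagonal (fun i => (p i : ℂ)) * star U := by
    have := hρ.spectral_theorem
    rw [Unitary.conjStarAlgAut_apply] at this
    exact this
  have key : (ρ * matLog σ).trace
      = (Matrix.diagonal (fun i => (p i : ℂ)) * W * Matrix.diagonal (fun j => (c j : ℂ)) * star W).trace := by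
    rw [hρ', hlog, hW]
    rw [Matrix.star_mul, star_star]
    rw [show U * Matrix.diagonal (fun i => (p i : ℂ)) * star U *
        (V * Matrix.diagonal (fun j => (c j : ℂ)) * star V)
      = U * (Matrix.diagonal (fun i => (p i : ℂ)) * (star U * V) *
          Matrix.diagonal (fun j => (c j : ℂ)) * (star V)) by
        simp only [Matrix.mul_assoc]]
    rw [Matrix.trace_mul_comm]
    simp only [Matrix.mul_assoc]
  rw [key]
  rw [Matrix.trace]
  have hdiag : ∀ i : n, (Matrix.diagonal (fun i => (p i : ℂ)) * W *
      Matrix.diagonal (fun j => (c j : ℂ)) * star W).diag i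
      = ∑ j, (p i : ℂ) * (W i j * (c j : ℂ) * (starRingEnd ℂ) (W i j)) := by
    intro i
    rw [Matrix.diag]
    rw [Matrix.mul_apply]
    apply Finset.sum_congr rfl
    intro j _
    rw [Matrix.mul_diagonal, Matrix.diagonal_mul, Matrix.star_apply]
    simp [mul_assoc, mul_comm, mul_left_comm, RCLike.star_def]
  simp only [hdiag]
  rw [Complex.re_sum]
  apply Finset.sum_congr rfl
  intro i _
  rw [Complex.re_sum]
  apply Finset.sum_congr rfl
  intro j _
  exact cterm (W i j) (p i) (c j)

lemma trace_mul_matLog_self (ρ : Matrix n n ℂ) (hρ : ρ.IsHermitian) :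
    ((ρ * matLog ρ).trace).re = ∑ i, hρ.eigenvalues i * Real.log (hρ.eigenvalues i) := by
  rw [trace_mul_matLog ρ ρ hρ hρ]
  have h1 : star (hρ.eigenvectorUnitary : Matrix n n ℂ) * (hρ.eigenvectorUnitary : Matrix n n ℂ)
      = 1 := by
    have := Unitary.coe_star_mul_self hρ.eigenvectorUnitary
    exact_mod_cast this
  rw [h1]
  apply Finset.sum_congr rfl
  intro i _
  rw [Finset.sum_eq_single i]
  · rw [Matrix.one_apply_eq]; norm_num
  · intro j _ hj
    rw [Matrix.one_apply_ne (Ne.symm hj)]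
    norm_num
  · simp

lemma unitary_rows_sum (W : Matrix n n ℂ) (hW : W * star W = 1) (i : n) :
    ∑ j, ‖W i j‖ ^ 2 = 1 := by
  have h := congrFun (congrFun hW i) i
  rw [Matrix.mul_apply, Matrix.one_apply_eq] at h
  have h2 : ∑ j, ((‖W i j‖ ^ 2 : ℝ) : ℂ) = 1 := by
    rw [← h]
    apply Finset.sum_congr rfl
    intro j _
    rw [Matrix.star_apply, RCLike.star_def, Complex.mul_conj']
    norm_cast
  have h3 : ((∑ j, ‖W i j‖ ^ 2 : ℝ) : ℂ) = ((1 : ℝ) : ℂ) := by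
    rw [Complex.ofReal_sum]
    rw [h2, Complex.ofReal_one]
  exact_mod_cast h3

lemma unitary_cols_sum (W : Matrix n n ℂ) (hW : star W * W = 1) (j : n) :
    ∑ i, ‖W i j‖ ^ 2 = 1 := by
  have h := congrFun (congrFun hW j) j
  rw [Matrix.mul_apply, Matrix.one_apply_eq] at h
  have h2 : ∑ i, ((‖W i j‖ ^ 2 : ℝ) : ℂ) = 1 := by
    rw [← h]
    apply Finset.sum_congr rfl
    intro i _
    rw [Matrix.star_apply, RCLike.star_def]
    rw [mul_comm, Complex.mul_conj']
    norm_cast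
  have h3 : ((∑ i, ‖W i j‖ ^ 2 : ℝ) : ℂ) = ((1 : ℝ) : ℂ) := by
    rw [Complex.ofReal_sum]
    rw [h2, Complex.ofReal_one]
  exact_mod_cast h3

lemma ds_mem (W : Matrix n n ℂ) (hW1 : W * star W = 1) (hW2 : star W * W = 1) :
    (Matrix.of fun i j => ‖W i j‖ ^ 2) ∈ doublyStochastic ℝ n := by
  rw [mem_doublyStochastic_iff_sum]
  exact ⟨fun i j => by simp only [Matrix.of_apply]; positivity,
    fun i => unitary_rows_sum W hW1 i, fun j => unitary_cols_sum W hW2 j⟩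

lemma evals_eq (ρ : Matrix n n ℂ) (hρ : ρ.IsHermitian) : evals ρ = hρ.eigenvalues := by
  rw [evals, dif_pos hρ]

end Trace

/-! ### The key sandwich bound for a single pair of states -/

lemma key_bounds {d : ℕ} {n : Type*} [Fintype n] [DecidableEq n] (e : Fin d ≃ n)
    (ρ σ : Matrix n n ℂ) (hρ : ρ.PosSemidef) (hσ : σ.PosDef) :
    relEnt (sortDesc (evals ρ ∘ e)) (sortDesc (evals σ ∘ e)) ≤ qRelEnt ρ σ ∧
    qRelEnt ρ σ ≤ relEnt (sortDesc (evals ρ ∘ e)) (sortAsc (evals σ ∘ e)) := by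
  have hρh : ρ.IsHermitian := hρ.1
  have hσh : σ.IsHermitian := hσ.1
  set p : n → ℝ := hρh.eigenvalues with hp
  set q : n → ℝ := hσh.eigenvalues with hq
  have hqpos : ∀ i, 0 < q i := fun i => hσ.eigenvalues_pos i
  set c : n → ℝ := fun j => Real.log (q j) with hc
  set U : Matrix n n ℂ := (hρh.eigenvectorUnitary : Matrix n n ℂ) with hU
  set V : Matrix n n ℂ := (hσh.eigenvectorUnitary : Matrix n n ℂ) with hV
  set W : Matrix n n ℂ := star U * V with hW
  -- unitarity of W
  have hU1 : star U * U = 1 := by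
    have := Unitary.coe_star_mul_self hρh.eigenvectorUnitary; exact_mod_cast this
  have hV1 : star V * V = 1 := by
    have := Unitary.coe_star_mul_self hσh.eigenvectorUnitary; exact_mod_cast this
  have hU2 : U * star U = 1 := by
    have := Unitary.coe_mul_star_self hρh.eigenvectorUnitary; exact_mod_cast this
  have hV2 : V * star V = 1 := by
    have := Unitary.coe_mul_star_self hσh.eigenvectorUnitary; exact_mod_cast this
  have hW1 : W * star W = 1 := by
    rw [hW, Matrix.star_mul, star_star, Matrix.mul_assoc, ← Matrix.mul_assoc V, hV2,
      Matrix.one_mul, hU1]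
  have hW2 : star W * W = 1 := by
    rw [hW, Matrix.star_mul, star_star, Matrix.mul_assoc, ← Matrix.mul_assoc U, hU2,
      Matrix.one_mul, hV1]
  have hD := ds_mem W hW1 hW2
  -- values
  set T : ℝ := ((ρ * matLog σ).trace).re with hT
  set P : ℝ := ∑ i, p i * Real.log (p i) with hP
  have hTval : T = ∑ i, ∑ j, p i * c j * (Matrix.of fun i j => ‖W i j‖ ^ 2) i j := by
    rw [hT, trace_mul_matLog ρ σ hρh hσh]
    rfl
  have hq' : qRelEnt ρ σ = P - T := by
    rw [qRelEnt, Matrix.mul_sub, Matrix.trace_sub, Complex.sub_re, hT,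
      trace_mul_matLog_self ρ hρh, hP]
  -- reindexed eigenvalue vectors
  have hev_ρ : evals ρ ∘ e = p ∘ e := by rw [evals_eq ρ hρh]
  have hev_σ : evals σ ∘ e = q ∘ e := by rw [evals_eq σ hσh]
  have hqpos' : ∀ i, 0 < (q ∘ e) i := fun i => hqpos _
  -- per-permutation bounds
  have hL : ∀ τ : Equiv.Perm n,
      ∑ i, sortDesc (p ∘ e) i * Real.log (sortAsc (q ∘ e) i) ≤ ∑ i, p i * c (τ i) := by
    intro τ
    have h := perm_lower (p ∘ e) (q ∘ e) hqpos' ((e.trans τ).trans e.symm)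
    refine h.trans_eq ?_
    rw [← Equiv.sum_comp e (fun i => p i * c (τ i))]
    apply Finset.sum_congr rfl
    intro i _
    simp only [Function.comp_apply, Equiv.trans_apply, Equiv.apply_symm_apply, hc]
  have hR : ∀ τ : Equiv.Perm n,
      ∑ i, p i * c (τ i) ≤ ∑ i, sortDesc (p ∘ e) i * Real.log (sortDesc (q ∘ e) i) := by
    intro τ
    have h := perm_upper (p ∘ e) (q ∘ e) hqpos' ((e.trans τ).trans e.symm)
    refine le_trans (le_of_eq ?_) h
    rw [← Equiv.sum_comp e (fun i => p i * c (τ i))]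
    apply Finset.sum_congr rfl
    intro i _
    simp only [Function.comp_apply, Equiv.trans_apply, Equiv.apply_symm_apply, hc]
  have hTb := ds_expand hD p c hL hR
  rw [← hTval] at hTb
  -- entropy sums
  have hPsum : ∑ i, sortDesc (p ∘ e) i * Real.log (sortDesc (p ∘ e) i) = P := by
    rw [sum_sortDesc (p ∘ e) (fun t => t * Real.log t), hP,
      ← Equiv.sum_comp e (fun i => p i * Real.log (p i))]
    rfl
  have hrel1 : relEnt (sortDesc (evals ρ ∘ e)) (sortDesc (evals σ ∘ e))
      = P - ∑ i, sortDesc (p ∘ e) i * Real.log (sortDesc (q ∘ e) i) := by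
    rw [hev_ρ, hev_σ, relEnt, ← hPsum, ← Finset.sum_sub_distrib]
    apply Finset.sum_congr rfl
    intro i _
    ring
  have hrel2 : relEnt (sortDesc (evals ρ ∘ e)) (sortAsc (evals σ ∘ e))
      = P - ∑ i, sortDesc (p ∘ e) i * Real.log (sortAsc (q ∘ e) i) := by
    rw [hev_ρ, hev_σ, relEnt, ← hPsum, ← Finset.sum_sub_distrib]
    apply Finset.sum_congr rfl
    intro i _
    ring
  constructor
  · rw [hrel1, hq']
    linarith [hTb.2]
  · rw [hrel2, hq']
    linarith [hTb.1]

/-! ### Partial traces preserve positivity -/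

section PTrace

variable {a b : ℕ}

/-- Embedding of a vector on `A` into `A × B`, supported on column `k`. -/
def embB (x : Fin a → ℂ) (k : Fin b) : Fin a × Fin b → ℂ :=
  fun p => if p.2 = k then x p.1 else 0

/-- Embedding of a vector on `B` into `A × B`, supported on row `k`. -/
def embA (x : Fin b → ℂ) (k : Fin a) : Fin a × Fin b → ℂ :=
  fun p => if p.1 = k then x p.2 else 0

lemma quad_ptraceB (ρ : Matrix (Fin a × Fin b) (Fin a × Fin b) ℂ) (x : Fin a → ℂ) :
    star x ⬝ᵥ (ptraceB ρ) *ᵥ x = ∑ k, star (embB x k) ⬝ᵥ ρ *ᵥ (embB x k) := by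
  simp only [dotProduct, mulVec, dotProduct, Pi.star_apply, ptraceB, embB,
    Fintype.sum_prod_type, apply_ite (star : ℂ → ℂ), star_zero, mul_ite, ite_mul,
    mul_zero, zero_mul, Finset.mul_sum, Finset.sum_mul]
  trans ∑ k : Fin b, ∑ i : Fin a, ∑ j : Fin a, star (x i) * (ρ (i, k) (j, k) * x j)
  · calc ∑ i : Fin a, ∑ j : Fin a, ∑ k : Fin b, star (x i) * (ρ (i, k) (j, k) * x j)
        = ∑ i : Fin a, ∑ k : Fin b, ∑ j : Fin a, star (x i) * (ρ (i, k) (j, k) * x j) :=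
          Finset.sum_congr rfl fun i _ => Finset.sum_comm
      _ = ∑ k : Fin b, ∑ i : Fin a, ∑ j : Fin a, star (x i) * (ρ (i, k) (j, k) * x j) :=
          Finset.sum_comm
  · apply Finset.sum_congr rfl
    intro k _
    apply Finset.sum_congr rfl
    intro i _
    rw [Finset.sum_comm]
    simp [Finset.sum_ite_eq']

lemma quad_ptraceA (ρ : Matrix (Fin a × Fin b) (Fin a × Fin b) ℂ) (x : Fin b → ℂ) :
    star x ⬝ᵥ (ptraceA ρ) *ᵥ x = ∑ k, star (embA x k) ⬝ᵥ ρ *ᵥ (embA x k) := by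
  simp only [dotProduct, mulVec, dotProduct, Pi.star_apply, ptraceA, embA,
    Fintype.sum_prod_type_right, apply_ite (star : ℂ → ℂ), star_zero, mul_ite, ite_mul,
    mul_zero, zero_mul, Finset.mul_sum, Finset.sum_mul]
  trans ∑ k : Fin a, ∑ i : Fin b, ∑ j : Fin b, star (x i) * (ρ (k, i) (k, j) * x j)
  · calc ∑ i : Fin b, ∑ j : Fin b, ∑ k : Fin a, star (x i) * (ρ (k, i) (k, j) * x j)
        = ∑ i : Fin b, ∑ k : Fin a, ∑ j : Fin b, star (x i) * (ρ (k, i) (k, j) * x j) :=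
          Finset.sum_congr rfl fun i _ => Finset.sum_comm
      _ = ∑ k : Fin a, ∑ i : Fin b, ∑ j : Fin b, star (x i) * (ρ (k, i) (k, j) * x j) :=
          Finset.sum_comm
  · apply Finset.sum_congr rfl
    intro k _
    apply Finset.sum_congr rfl
    intro i _
    rw [Finset.sum_comm]
    simp [Finset.sum_ite_eq']

lemma ptraceB_isHermitian {ρ : Matrix (Fin a × Fin b) (Fin a × Fin b) ℂ}
    (hρ : ρ.IsHermitian) : (ptraceB ρ).IsHermitian := by
  ext i j
  simp only [conjTranspose_apply, ptraceB, star_sum]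
  apply Finset.sum_congr rfl
  intro k _
  calc star (ρ (j, k) (i, k)) = ρᴴ (i, k) (j, k) := rfl
  _ = ρ (i, k) (j, k) := by rw [hρ]

lemma ptraceA_isHermitian {ρ : Matrix (Fin a × Fin b) (Fin a × Fin b) ℂ}
    (hρ : ρ.IsHermitian) : (ptraceA ρ).IsHermitian := by
  ext i j
  simp only [conjTranspose_apply, ptraceA, star_sum]
  apply Finset.sum_congr rfl
  intro k _
  calc star (ρ (k, j) (k, i)) = ρᴴ (k, i) (k, j) := rfl
  _ = ρ (k, i) (k, j) := by rw [hρ]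

lemma ptraceB_posSemidef {ρ : Matrix (Fin a × Fin b) (Fin a × Fin b) ℂ}
    (hρ : ρ.PosSemidef) : (ptraceB ρ).PosSemidef := by
  refine .of_dotProduct_mulVec_nonneg (ptraceB_isHermitian hρ.1) fun x => ?_
  rw [quad_ptraceB]
  exact Finset.sum_nonneg fun k _ => hρ.dotProduct_mulVec_nonneg _

lemma ptraceA_posSemidef {ρ : Matrix (Fin a × Fin b) (Fin a × Fin b) ℂ}
    (hρ : ρ.PosSemidef) : (ptraceA ρ).PosSemidef := by
  refine .of_dotProduct_mulVec_nonneg (ptraceA_isHermitian hρ.1) fun x => ?_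
  rw [quad_ptraceA]
  exact Finset.sum_nonneg fun k _ => hρ.dotProduct_mulVec_nonneg _

lemma embB_ne_zero {x : Fin a → ℂ} (hx : x ≠ 0) (k : Fin b) : embB x k ≠ 0 := by
  obtain ⟨i, hi⟩ := Function.ne_iff.1 hx
  intro h
  apply hi
  have := congrFun h (i, k)
  simpa [embB] using this

lemma embA_ne_zero {x : Fin b → ℂ} (hx : x ≠ 0) (k : Fin a) : embA x k ≠ 0 := by
  obtain ⟨i, hi⟩ := Function.ne_iff.1 hx
  intro h
  apply hi
  have := congrFun h (k, i)
  simpa [embA] using this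

lemma ptraceB_posDef {ρ : Matrix (Fin a × Fin b) (Fin a × Fin b) ℂ}
    (hρ : ρ.PosDef) (hb : 0 < b) : (ptraceB ρ).PosDef := by
  refine .of_dotProduct_mulVec_pos (ptraceB_isHermitian hρ.1) fun x hx => ?_
  rw [quad_ptraceB]
  refine Finset.sum_pos' (fun k _ => hρ.posSemidef.dotProduct_mulVec_nonneg _) ⟨⟨0, hb⟩, Finset.mem_univ _, ?_⟩
  exact hρ.dotProduct_mulVec_pos (embB_ne_zero hx _)

lemma ptraceA_posDef {ρ : Matrix (Fin a × Fin b) (Fin a × Fin b) ℂ}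
    (hρ : ρ.PosDef) (ha : 0 < a) : (ptraceA ρ).PosDef := by
  refine .of_dotProduct_mulVec_pos (ptraceA_isHermitian hρ.1) fun x hx => ?_
  rw [quad_ptraceA]
  refine Finset.sum_pos' (fun k _ => hρ.posSemidef.dotProduct_mulVec_nonneg _) ⟨⟨0, ha⟩, Finset.mem_univ _, ?_⟩
  exact hρ.dotProduct_mulVec_pos (embA_ne_zero hx _)

end PTrace

theorem stmt_15 {dA dB : ℕ}
    (ρ σ : Matrix (Fin dA × Fin dB) (Fin dA × Fin dB) ℂ)
    (hρ : ρ.PosSemidef) (hρ1 : ρ.trace = 1)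
    (hσ : σ.PosDef) (hσ1 : σ.trace = 1) :
    relEnt (sortDesc (evalsP ρ)) (sortDesc (evalsP σ)) -
        relEnt (sortDesc (evals (ptraceB ρ))) (sortAsc (evals (ptraceB σ))) -
        relEnt (sortDesc (evals (ptraceA ρ))) (sortAsc (evals (ptraceA σ))) ≤
      qRelEnt ρ σ - qRelEnt (ptraceB ρ) (ptraceB σ) - qRelEnt (ptraceA ρ) (ptraceA σ) ∧
    qRelEnt ρ σ - qRelEnt (ptraceB ρ) (ptraceB σ) - qRelEnt (ptraceA ρ) (ptraceA σ) ≤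
      relEnt (sortDesc (evalsP ρ)) (sortAsc (evalsP σ)) -
        relEnt (sortDesc (evals (ptraceB ρ))) (sortDesc (evals (ptraceB σ))) -
        relEnt (sortDesc (evals (ptraceA ρ))) (sortDesc (evals (ptraceA σ))) := by
  have ha : 0 < dA := by
    rcases Nat.eq_zero_or_pos dA with h | h
    · exfalso
      subst h
      rw [Matrix.trace] at hσ1
      simp at hσ1
    · exact h
  have hb : 0 < dB := by
    rcases Nat.eq_zero_or_pos dB with h | h
    · exfalso
      subst h
      rw [Matrix.trace] at hσ1
      simp at hσ1
    · exact h
  have kAB := key_bounds (finProdFinEquiv.symm : Fin (dA * dB) ≃ Fin dA × Fin dB) ρ σ hρ hσ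
  have kA := key_bounds (Equiv.refl (Fin dA)) (ptraceB ρ) (ptraceB σ)
    (ptraceB_posSemidef hρ) (ptraceB_posDef hσ hb)
  have kB := key_bounds (Equiv.refl (Fin dB)) (ptraceA ρ) (ptraceA σ)
    (ptraceA_posSemidef hρ) (ptraceA_posDef hσ ha)
  simp only [Equiv.coe_refl, Function.comp_id] at kA kB
  have hAB1 : evalsP ρ = evals ρ ∘ ⇑(finProdFinEquiv.symm : Fin (dA * dB) ≃ Fin dA × Fin dB) := rfl
  have hAB2 : evalsP σ = evals σ ∘ ⇑(finProdFinEquiv.symm : Fin (dA * dB) ≃ Fin dA × Fin dB) := rfl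
  rw [hAB1, hAB2]
  obtain ⟨hAB_lo, hAB_hi⟩ := kAB
  obtain ⟨hA_lo, hA_hi⟩ := kA
  obtain ⟨hB_lo, hB_hi⟩ := kB
  constructor <;> linarith
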